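/- Let F be a field, let n, d, t be positive integers with n ≥ 2d and t ≤ d, and let ε ∈ (0,1). Suppose A ∈ F^{n×n} is ε-far from rank at most d, and let R, C ⊆ {1,…,n} with |R| = |C| = t be such that the submatrix A_{R,C} is invertible (i.e., rank(A_{R,C}) = t). Then |aug(R,C)| ≥ εn²/3. -/

import Mathlib

open Matrix Finset
open scoped Classical

/-- The rank of the submatrix of `A` with rows indexed by `R` and columns by `C`. -/
noncomputable def subRank {F : Type} [Field F] {n : ℕ} (A : Matrix (Fin n) (Fin n) F)
    (R C : Finset (Fin n)) : ℕ :=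
  (A.submatrix (fun i : {x // x ∈ R} => i.1) (fun j : {x // x ∈ C} => j.1)).rank

/-- The augment set `aug(R,C)`: pairs `(r,c)` with `r ∉ R`, `c ∉ C` such that adjoining the row
`r` and the column `c` increases the rank of the submatrix. -/
noncomputable def augSet {F : Type} [Field F] {n : ℕ} (A : Matrix (Fin n) (Fin n) F)
    (R C : Finset (Fin n)) : Finset (Fin n × Fin n) :=
  Finset.univ.filter fun p : Fin n × Fin n =>
    p.1 ∉ R ∧ p.2 ∉ C ∧ subRank A R C < subRank A (insert p.1 R) (insert p.2 C)

lemma myRank_submatrix_le {F : Type} [Field F] {m n m' n' : Type}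
    [Fintype m] [Fintype n] [Fintype m'] [Fintype n'] [DecidableEq m] [DecidableEq n]
    (M : Matrix m n F) (f : m' → m) (g : n' → n) :
    (M.submatrix f g).rank ≤ M.rank := by
  have hQ : M.submatrix f g =
      (Matrix.of fun i k => if k = f i then (1:F) else 0) * M *
      (Matrix.of fun k j => if k = g j then (1:F) else 0) := by
    ext i j
    simp [Matrix.mul_apply, Finset.sum_ite_eq, Finset.sum_ite_eq']
  rw [hQ]
  calc ((Matrix.of fun i k => if k = f i then (1:F) else 0) * M *
      (Matrix.of fun k j => if k = g j then (1:F) else 0)).rank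
      ≤ ((Matrix.of fun i k => if k = f i then (1:F) else 0) * M).rank :=
        Matrix.rank_mul_le_left _ _
    _ ≤ M.rank := Matrix.rank_mul_le_right _ _

lemma myRank_submatrix_eq {F : Type} [Field F] {m n m' n' : Type}
    [Fintype m] [Fintype n] [Fintype m'] [Fintype n'] [DecidableEq m] [DecidableEq n]
    [DecidableEq m'] [DecidableEq n']
    (M : Matrix m n F) (e₁ : m' ≃ m) (e₂ : n' ≃ n) :
    (M.submatrix e₁ e₂).rank = M.rank := by
  refine le_antisymm (myRank_submatrix_le M e₁ e₂) ?_
  have := myRank_submatrix_le (M.submatrix e₁ e₂) e₁.symm e₂.symm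
  simpa [Matrix.submatrix_submatrix, Function.comp_def] using this

lemma myIsUnit_of_rank {F : Type} [Field F] {t : ℕ} (S : Matrix (Fin t) (Fin t) F)
    (h : S.rank = t) : IsUnit S.det := by
  rw [isUnit_iff_ne_zero]
  intro hdet
  obtain ⟨v, hv, hmv⟩ := (Matrix.exists_mulVec_eq_zero_iff).2 hdet
  have hker : v ∈ LinearMap.ker S.mulVecLin := by
    simpa [Matrix.mulVecLin_apply] using hmv
  have hk0 : LinearMap.ker S.mulVecLin ≠ ⊥ := by
    intro hb
    rw [hb, Submodule.mem_bot] at hker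
    exact hv hker
  have h1 : 0 < Module.finrank F (LinearMap.ker S.mulVecLin) := by
    rcases Nat.eq_zero_or_pos (Module.finrank F (LinearMap.ker S.mulVecLin)) with h0 | h0
    · exact absurd (Submodule.finrank_eq_zero.mp h0) hk0
    · exact h0
  have hrn := LinearMap.finrank_range_add_finrank_ker S.mulVecLin
  rw [Module.finrank_fintype_fun_eq_card, Fintype.card_fin] at hrn
  have : S.rank = Module.finrank F (LinearMap.range S.mulVecLin) := rfl
  omega

theorem stmt0 {F : Type} [Field F] {n d t : ℕ} (hn : 0 < n) (hd : 0 < d) (ht : 0 < t)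
    (hnd : 2 * d ≤ n) (htd : t ≤ d) {ε : ℝ} (hε0 : 0 < ε) (hε1 : ε < 1)
    (A : Matrix (Fin n) (Fin n) F)
    (hfar : ∀ B : Matrix (Fin n) (Fin n) F, B.rank ≤ d →
      ε * (n : ℝ) ^ 2 ≤ ((Finset.univ.filter
        fun p : Fin n × Fin n => A p.1 p.2 ≠ B p.1 p.2).card : ℝ))
    (R C : Finset (Fin n)) (hR : R.card = t) (hC : C.card = t)
    (hrank : subRank A R C = t) :
    ε * (n : ℝ) ^ 2 / 3 ≤ ((augSet A R C).card : ℝ) := by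
  -- reindexing equivs
  set eR : Fin t ≃ {x // x ∈ R} := (R.orderIsoOfFin hR).toEquiv with heR
  set eC : Fin t ≃ {x // x ∈ C} := (C.orderIsoOfFin hC).toEquiv with heC
  set S : Matrix (Fin t) (Fin t) F :=
    Matrix.of (fun i j => A (eR i : Fin n) (eC j : Fin n)) with hS
  have hSsub : S = (A.submatrix (fun i : {x // x ∈ R} => i.1)
      (fun j : {x // x ∈ C} => j.1)).submatrix eR eC := rfl
  have hSrank : S.rank = t := by
    rw [hSsub, myRank_submatrix_eq]
    exact hrank
  have hSdet : IsUnit S.det := myIsUnit_of_rank S hSrank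
  set X : Matrix (Fin n) (Fin t) F := Matrix.of (fun i k => A i (eC k : Fin n)) with hX
  set Y : Matrix (Fin t) (Fin n) F := Matrix.of (fun l j => A (eR l : Fin n) j) with hY
  set B : Matrix (Fin n) (Fin n) F := X * S⁻¹ * Y with hB
  -- rank of B
  have hBrank : B.rank ≤ d := by
    calc B.rank = (X * (S⁻¹ * Y)).rank := by rw [hB, Matrix.mul_assoc]
      _ ≤ (S⁻¹ * Y).rank := Matrix.rank_mul_le_right _ _
      _ ≤ Fintype.card (Fin t) := Matrix.rank_le_card_height _
      _ = t := Fintype.card_fin t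
      _ ≤ d := htd
  -- B agrees with A on rows in R
  have hrow : ∀ r ∈ R, ∀ j, B r j = A r j := by
    intro r hr j
    set k₀ : Fin t := eR.symm ⟨r, hr⟩ with hk₀
    have hXr : ∀ k, X r k = S k₀ k := by
      intro k
      have : (eR k₀ : Fin n) = r := by rw [hk₀, Equiv.apply_symm_apply]
      simp [hX, hS, this]
    have hXS : ∀ l, (X * S⁻¹) r l = (1 : Matrix (Fin t) (Fin t) F) k₀ l := by
      intro l
      rw [← Matrix.mul_nonsing_inv S hSdet]
      simp [Matrix.mul_apply, hXr]
    have : (eR k₀ : Fin n) = r := by rw [hk₀, Equiv.apply_symm_apply]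
    calc B r j = ∑ l, (X * S⁻¹) r l * Y l j := by rw [hB, Matrix.mul_apply]
      _ = ∑ l, (1 : Matrix (Fin t) (Fin t) F) k₀ l * Y l j := by
          simp only [hXS]
      _ = Y k₀ j := by simp [Matrix.one_apply]
      _ = A r j := by simp [hY, this]
  -- B agrees with A on columns in C
  have hcol : ∀ c ∈ C, ∀ i, B i c = A i c := by
    intro c hc i
    set k₀ : Fin t := eC.symm ⟨c, hc⟩ with hk₀
    have hec : (eC k₀ : Fin n) = c := by rw [hk₀, Equiv.apply_symm_apply]
    have hYc : ∀ l, Y l c = S l k₀ := by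
      intro l
      simp [hY, hS, hec]
    have hSY : ∀ l, (S⁻¹ * Y) l c = (1 : Matrix (Fin t) (Fin t) F) l k₀ := by
      intro l
      rw [← Matrix.nonsing_inv_mul S hSdet]
      simp [Matrix.mul_apply, hYc]
    calc B i c = ∑ l, X i l * (S⁻¹ * Y) l c := by
          rw [hB, Matrix.mul_assoc, Matrix.mul_apply]
      _ = ∑ l, X i l * (1 : Matrix (Fin t) (Fin t) F) l k₀ := by simp only [hSY]
      _ = X i k₀ := by simp [Matrix.one_apply]
      _ = A i c := by simp [hX, hec]
  -- disagreements give rank increment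
  have hmem : ∀ p : Fin n × Fin n, A p.1 p.2 ≠ B p.1 p.2 → p ∈ augSet A R C := by
    rintro ⟨r, c⟩ hne
    have hrR : r ∉ R := fun hr => hne ((hrow r hr c).symm)
    have hcC : c ∉ C := fun hc => hne ((hcol c hc r).symm)
    refine Finset.mem_filter.mpr ⟨Finset.mem_univ _, hrR, hcC, ?_⟩
    rw [hrank]
    show t < subRank A (insert r R) (insert c C)
    -- build equivs onto the enlarged index sets
    have hrmem : r ∈ insert r R := Finset.mem_insert_self r R
    have hcmem : c ∈ insert c C := Finset.mem_insert_self c C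
    let e₁ : Fin t ⊕ Unit ≃ {x // x ∈ insert r R} :=
      { toFun := fun x => Sum.elim (fun i => ⟨(eR i : Fin n),
          Finset.mem_insert_of_mem (eR i).2⟩) (fun _ => ⟨r, hrmem⟩) x
        invFun := fun x => if h : (x : Fin n) ∈ R then Sum.inl (eR.symm ⟨x, h⟩) else Sum.inr ()
        left_inv := by
          rintro (i | ⟨⟩)
          · simp only [Sum.elim_inl]
            erw [dif_pos (eR i).2]
            congr
            simp
          · simp only [Sum.elim_inr]
            erw [dif_neg hrR]
        right_inv := by
          rintro ⟨x, hx⟩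
          by_cases h : x ∈ R
          · simp only [dif_pos h, Sum.elim_inl]
            congr
            simp [Equiv.apply_symm_apply]
          · simp only [dif_neg h, Sum.elim_inr]
            have : x = r := by
              rcases Finset.mem_insert.mp hx with h' | h'
              · exact h'
              · exact absurd h' h
            simp [this] }
    let e₂ : Fin t ⊕ Unit ≃ {x // x ∈ insert c C} :=
      { toFun := fun x => Sum.elim (fun i => ⟨(eC i : Fin n),
          Finset.mem_insert_of_mem (eC i).2⟩) (fun _ => ⟨c, hcmem⟩) x
        invFun := fun x => if h : (x : Fin n) ∈ C then Sum.inl (eC.symm ⟨x, h⟩) else Sum.inr ()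
        left_inv := by
          rintro (i | ⟨⟩)
          · simp only [Sum.elim_inl]
            erw [dif_pos (eC i).2]
            congr
            simp
          · simp only [Sum.elim_inr]
            erw [dif_neg hcC]
        right_inv := by
          rintro ⟨x, hx⟩
          by_cases h : x ∈ C
          · simp only [dif_pos h, Sum.elim_inl]
            congr
            simp [Equiv.apply_symm_apply]
          · simp only [dif_neg h, Sum.elim_inr]
            have : x = c := by
              rcases Finset.mem_insert.mp hx with h' | h'
              · exact h'
              · exact absurd h' h
            simp [this] }
    set u : Matrix (Fin t) Unit F := Matrix.of (fun i _ => A (eR i : Fin n) c) with hu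
    set v : Matrix Unit (Fin t) F := Matrix.of (fun _ j => A r (eC j : Fin n)) with hv
    set D : Matrix Unit Unit F := Matrix.of (fun _ _ => A r c) with hD
    set T : Matrix (Fin t ⊕ Unit) (Fin t ⊕ Unit) F := Matrix.fromBlocks S u v D with hT
    haveI : Invertible S := S.invertibleOfIsUnitDet hSdet
    have hBrc : B r c = (v * S⁻¹ * u) () () := by
      rw [hB]
      simp [Matrix.mul_apply, hu, hv, hX, hY]
    have hdetT : T.det ≠ 0 := by
      rw [hT, Matrix.det_fromBlocks₁₁, Matrix.invOf_eq_nonsing_inv]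
      have hD1 : (D - v * S⁻¹ * u).det = A r c - B r c := by
        rw [Matrix.det_unique]
        simp [hD, hBrc]
      rw [hD1]
      refine mul_ne_zero (IsUnit.ne_zero hSdet) (sub_ne_zero.mpr hne)
    have hTsub : T = (A.submatrix (fun i : {x // x ∈ insert r R} => i.1)
        (fun j : {x // x ∈ insert c C} => j.1)).submatrix e₁ e₂ := by
      ext (i | ⟨⟩) (j | ⟨⟩) <;> rfl
    have hTrank : T.rank = t + 1 := by
      have := Matrix.rank_of_isUnit T ((Matrix.isUnit_iff_isUnit_det T).mpr
        (isUnit_iff_ne_zero.mpr hdetT))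
      simpa using this
    have : subRank A (insert r R) (insert c C) = t + 1 := by
      rw [subRank, ← myRank_submatrix_eq _ e₁ e₂, ← hTsub, hTrank]
    omega
  -- conclude
  have hsub : (Finset.univ.filter
      fun p : Fin n × Fin n => A p.1 p.2 ≠ B p.1 p.2) ⊆ augSet A R C := by
    intro p hp
    exact hmem p (Finset.mem_filter.mp hp).2
  have hcard := Finset.card_le_card hsub
  have h1 := hfar B hBrank
  have h2 : ((Finset.univ.filter
      fun p : Fin n × Fin n => A p.1 p.2 ≠ B p.1 p.2).card : ℝ)
      ≤ ((augSet A R C).card : ℝ) := by exact_mod_cast hcard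
  nlinarith [sq_nonneg (n : ℝ), mul_pos hε0 (by positivity : (0:ℝ) < (n:ℝ)^2)]
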